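/- Let q ≥ 2 be an integer and let x be a real number with |x| < 1/q. Then the families d ↦ (1 − x^d)^{N*(2d,q)} and d ↦ (1 − x^d)^{M*(d,q)} over d ≥ 1 are multipliable (real-power exponentiation with positive bases), and Π_{d≥1} (1 − x^d)^{N*(2d,q)} · Π_{d≥1} (1 − x^d)^{M*(d,q)} = (1 − qx)/(1 − x)^{e(q)}. -/

import Mathlib

/-- `e(q)`: `1` if `q` is even, `2` if `q` is odd. -/
def efun (q : ℕ) : ℕ := if Even q then 1 else 2

/-- `N(d,q) = (1/d) Σ_{a ∣ d} μ(a) (q^{d/a} - 1)`. -/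
noncomputable def Nfun (d q : ℕ) : ℚ :=
  (1 / (d : ℚ)) *
    ∑ a ∈ d.divisors, ((ArithmeticFunction.moebius a : ℤ) : ℚ) * ((q : ℚ) ^ (d / a) - 1)

/-- `N*(d,q)`: for even `d`, `(1/d) Σ_{a ∣ d, a odd} μ(a) (q^{d/(2a)} + 1 - e(q))`;
`N*(1,q) = e(q)`; and `N*(d,q) = 0` for odd `d > 1`. -/
noncomputable def Nstar (d q : ℕ) : ℚ :=
  if Even d then
    (1 / (d : ℚ)) *
      ∑ a ∈ d.divisors.filter (fun a => Odd a),
        ((ArithmeticFunction.moebius a : ℤ) : ℚ) * ((q : ℚ) ^ (d / (2 * a)) + 1 - efun q)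
  else if d = 1 then (efun q : ℚ) else 0

/-- `M*(d,q) = (N(d,q) - N*(d,q))/2`. -/
noncomputable def Mstar (d q : ℕ) : ℚ := (Nfun d q - Nstar d q) / 2

open ArithmeticFunction Finset

-- sum of moebius over divisors
lemma sum_moebius_eq (d : ℕ) (hd : d ≠ 0) :
    ∑ a ∈ d.divisors, ((moebius a : ℤ) : ℚ) = if d = 1 then 1 else 0 := by
  have h := congrArg (fun f => f d) moebius_mul_coe_zeta
  simp only [coe_mul_zeta_apply, one_apply] at h
  have h2 : ((∑ a ∈ d.divisors, (moebius a) : ℤ) : ℚ) = (((if d = 1 then 1 else 0 : ℤ)) : ℚ) := by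
    rw [h]
  push_cast at h2
  rw [h2]

-- odd divisors of 2d = odd divisors of d
lemma filter_odd_two_mul (d : ℕ) (hd : d ≠ 0) :
    (2*d).divisors.filter (fun a => Odd a) = d.divisors.filter (fun a => Odd a) := by
  ext a
  simp only [Finset.mem_filter, Nat.mem_divisors]
  constructor
  · rintro ⟨⟨hdvd, -⟩, hodd⟩
    exact ⟨⟨(Nat.Coprime.dvd_of_dvd_mul_left (hodd.coprime_two_right) hdvd), hd⟩, hodd⟩
  · rintro ⟨⟨hdvd, -⟩, hodd⟩
    exact ⟨⟨hdvd.mul_left 2, by positivity⟩, hodd⟩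

-- Sub B
lemma two_d_nstar (q d : ℕ) (hd : d ≠ 0) :
    (2*(d:ℚ)) * Nstar (2*d) q =
      ∑ a ∈ d.divisors.filter (fun a => Odd a),
        ((moebius a : ℤ) : ℚ) * ((q : ℚ) ^ (d / a) + 1 - efun q) := by
  have h2d : Even (2*d) := even_two_mul d
  rw [Nstar, if_pos h2d, filter_odd_two_mul d hd]
  have hc : (2*(d:ℚ)) ≠ 0 := by positivity
  rw [← mul_assoc]
  push_cast
  rw [mul_one_div, div_self hc, one_mul]
  refine Finset.sum_congr rfl fun a ha => ?_
  have : 2 * d / (2 * a) = d / a := Nat.mul_div_mul_left _ _ (by norm_num)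
  rw [this]

-- Sub A
lemma d_nfun (q d : ℕ) (hd : d ≠ 0) :
    (d:ℚ) * Nfun d q = ∑ a ∈ d.divisors, ((moebius a : ℤ) : ℚ) * ((q : ℚ) ^ (d / a) - 1) := by
  rw [Nfun, ← mul_assoc, mul_one_div, div_self (by exact_mod_cast hd), one_mul]

lemma filter_not_odd_eq_image (d : ℕ) (hd : d ≠ 0) (hde : Even d) :
    d.divisors.filter (fun a => ¬ Odd a) = (d/2).divisors.image (fun b => 2*b) := by
  obtain ⟨c, hc⟩ := hde
  have hc2 : d = 2 * c := by omega
  have hcd : d / 2 = c := by omega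
  have hc0 : c ≠ 0 := by omega
  ext a
  simp only [Finset.mem_filter, Nat.mem_divisors, Finset.mem_image, Nat.not_odd_iff_even, hcd]
  constructor
  · rintro ⟨⟨hdvd, -⟩, ⟨b, hb⟩⟩
    have hb2 : a = 2 * b := by omega
    refine ⟨b, ⟨⟨?_, hc0⟩, hb2.symm⟩⟩
    subst hb2 hc2
    exact (Nat.mul_dvd_mul_iff_left (by norm_num : 0 < 2)).mp hdvd
  · rintro ⟨b, ⟨hdvd, -⟩, rfl⟩
    exact ⟨⟨by rw [hc2]; exact Nat.mul_dvd_mul_left 2 hdvd, hd⟩, ⟨b, by ring⟩⟩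

lemma moebius_two_mul_even (b : ℕ) (hb : Even b) : moebius (2*b) = 0 := by
  apply moebius_eq_zero_of_not_squarefree
  obtain ⟨c, hc⟩ := hb
  intro hs
  have : (2:ℕ) * 2 ∣ 2 * b := ⟨c, by omega⟩
  exact absurd (Nat.isUnit_iff.mp (hs 2 this)) (by norm_num)

lemma moebius_two_mul_odd (b : ℕ) (hb : Odd b) : moebius (2*b) = - moebius b := by
  rw [isMultiplicative_moebius.map_mul_of_coprime (Nat.coprime_two_left.mpr hb)]
  rw [moebius_apply_prime Nat.prime_two]
  ring

lemma filter_odd_half (d : ℕ) (hd : d ≠ 0) (hde : Even d) :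
    (d/2).divisors.filter (fun a => Odd a) = d.divisors.filter (fun a => Odd a) := by
  obtain ⟨c, hc⟩ := hde
  have hc2 : d = 2 * c := by omega
  have hcd : d / 2 = c := by omega
  rw [hcd, hc2]
  exact (filter_odd_two_mul c (by omega)).symm

lemma sum_even_part (q d : ℕ) (hd : d ≠ 0) (hde : Even d) :
    ∑ a ∈ d.divisors.filter (fun a => Odd a),
        ((moebius a : ℤ):ℚ) * ((q:ℚ)^(d/a) - (q:ℚ)^(d/(2*a)))
    = ∑ a ∈ d.divisors, ((moebius a : ℤ):ℚ) * (q:ℚ)^(d/a) := by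
  classical
  have hsplit := Finset.sum_filter_add_sum_filter_not d.divisors (fun a => Odd a)
      (fun a => ((moebius a : ℤ):ℚ) * (q:ℚ)^(d/a))
  rw [← hsplit]
  -- evaluate the even part
  have himg : ∑ a ∈ d.divisors.filter (fun a => ¬ Odd a), ((moebius a : ℤ):ℚ) * (q:ℚ)^(d/a)
      = ∑ b ∈ (d/2).divisors, ((moebius (2*b) : ℤ):ℚ) * (q:ℚ)^(d/(2*b)) := by
    rw [filter_not_odd_eq_image d hd hde, Finset.sum_image]
    intro x _ y _ h
    simp only at h
    omega
  have hsplit2 := Finset.sum_filter_add_sum_filter_not (d/2).divisors (fun a => Odd a)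
      (fun b => ((moebius (2*b) : ℤ):ℚ) * (q:ℚ)^(d/(2*b)))
  have hzero : ∑ b ∈ (d/2).divisors.filter (fun a => ¬ Odd a),
      ((moebius (2*b) : ℤ):ℚ) * (q:ℚ)^(d/(2*b)) = 0 := by
    apply Finset.sum_eq_zero
    intro b hb
    rw [Finset.mem_filter, Nat.not_odd_iff_even] at hb
    rw [moebius_two_mul_even b hb.2]
    norm_num
  have hodd2 : ∑ b ∈ (d/2).divisors.filter (fun a => Odd a),
      ((moebius (2*b) : ℤ):ℚ) * (q:ℚ)^(d/(2*b))
      = - ∑ b ∈ d.divisors.filter (fun a => Odd a), ((moebius b : ℤ):ℚ) * (q:ℚ)^(d/(2*b)) := by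
    rw [filter_odd_half d hd hde, ← Finset.sum_neg_distrib]
    apply Finset.sum_congr rfl
    intro b hb
    rw [Finset.mem_filter] at hb
    rw [moebius_two_mul_odd b hb.2]
    push_cast
    ring
  rw [himg, ← hsplit2, hzero, add_zero, hodd2, ← sub_eq_add_neg, ← Finset.sum_sub_distrib]
  apply Finset.sum_congr rfl
  intro a _
  ring

lemma d_nstar_even (q d : ℕ) (hd : d ≠ 0) (hde : Even d) :
    (d:ℚ) * Nstar d q =
      ∑ a ∈ d.divisors.filter (fun a => Odd a),
        ((moebius a : ℤ) : ℚ) * ((q : ℚ) ^ (d / (2 * a)) + 1 - efun q) := by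
  rw [Nstar, if_pos hde, ← mul_assoc, mul_one_div, div_self (by exact_mod_cast hd), one_mul]

lemma filter_odd_of_odd (d : ℕ) (hdo : Odd d) :
    d.divisors.filter (fun a => Odd a) = d.divisors := by
  apply Finset.filter_true_of_mem
  intro a ha
  rcases Nat.even_or_odd a with he | ho
  · exfalso
    have : (2:ℕ) ∣ d := dvd_trans he.two_dvd (Nat.mem_divisors.mp ha).1
    rw [Nat.odd_iff] at hdo
    omega
  · exact ho

/-- Per-divisor identity. -/
lemma per_divisor (q d : ℕ) (hq : 2 ≤ q) (hd : d ≠ 0) :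
    (d:ℚ) * (Nstar (2*d) q + Mstar d q)
      = ∑ a ∈ d.divisors, ((moebius a : ℤ) : ℚ) * ((q:ℚ)^(d/a) - efun q) := by
  have hB := two_d_nstar q d hd
  have hA := d_nfun q d hd
  have hZ := sum_moebius_eq d hd
  have hexp : (d:ℚ) * (Nstar (2*d) q + Mstar d q)
      = ((2*(d:ℚ)) * Nstar (2*d) q + (d:ℚ) * Nfun d q - (d:ℚ) * Nstar d q) / 2 := by
    rw [Mstar]; ring
  -- rewrite RHS as A - e * Z
  have hRHS : ∑ a ∈ d.divisors, ((moebius a : ℤ) : ℚ) * ((q:ℚ)^(d/a) - efun q)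
      = (∑ a ∈ d.divisors, ((moebius a : ℤ) : ℚ) * (q:ℚ)^(d/a))
        - (efun q : ℚ) * ∑ a ∈ d.divisors, ((moebius a : ℤ) : ℚ) := by
    rw [Finset.mul_sum, ← Finset.sum_sub_distrib]
    apply Finset.sum_congr rfl; intro a _; ring
  rcases eq_or_ne d 1 with rfl | hd1
  · have hfil1 : (Nat.divisors 1).filter (fun a => Odd a) = {1} := by decide
    have hN1 : Nstar 1 q = (efun q : ℚ) := by rw [Nstar, if_neg (by decide), if_pos rfl]
    rw [hexp, hRHS, hB, hA, hfil1, hN1, Nat.divisors_one]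
    simp only [Finset.sum_singleton, moebius_apply_one, Nat.div_one]
    push_cast
    ring
  · rcases Nat.even_or_odd d with hde | hdo
    · -- even case
      have hC := d_nstar_even q d hd hde
      have hEP := sum_even_part q d hd hde
      have hZ0 : ∑ a ∈ d.divisors, ((moebius a : ℤ) : ℚ) = 0 := by rw [hZ, if_neg hd1]
      rw [hexp, hRHS, hB, hA, hC, hZ0]
      have hBC : (∑ a ∈ d.divisors.filter (fun a => Odd a),
            ((moebius a : ℤ) : ℚ) * ((q:ℚ)^(d/a) + 1 - efun q))
          - (∑ a ∈ d.divisors.filter (fun a => Odd a),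
            ((moebius a : ℤ) : ℚ) * ((q:ℚ)^(d/(2*a)) + 1 - efun q))
          = ∑ a ∈ d.divisors.filter (fun a => Odd a),
            ((moebius a : ℤ):ℚ) * ((q:ℚ)^(d/a) - (q:ℚ)^(d/(2*a))) := by
        rw [← Finset.sum_sub_distrib]
        apply Finset.sum_congr rfl; intro a _; ring
      have hAZ : ∑ a ∈ d.divisors, ((moebius a : ℤ) : ℚ) * ((q:ℚ)^(d/a) - 1)
          = ∑ a ∈ d.divisors, ((moebius a : ℤ) : ℚ) * (q:ℚ)^(d/a) := by
        rw [show ∑ a ∈ d.divisors, ((moebius a : ℤ) : ℚ) * ((q:ℚ)^(d/a) - 1)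
            = (∑ a ∈ d.divisors, ((moebius a : ℤ) : ℚ) * (q:ℚ)^(d/a))
              - ∑ a ∈ d.divisors, ((moebius a : ℤ) : ℚ) from by
          rw [← Finset.sum_sub_distrib]; apply Finset.sum_congr rfl; intro a _; ring, hZ0,
          sub_zero]
      rw [hAZ]
      rw [div_eq_iff (by norm_num : (2:ℚ) ≠ 0)]
      linear_combination hBC + hEP
    · -- odd case, d > 1
      have hNstar0 : Nstar d q = 0 := by
        rw [Nstar, if_neg (Nat.not_even_iff_odd.mpr hdo), if_neg hd1]
      have hfil := filter_odd_of_odd d hdo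
      have hZ0 : ∑ a ∈ d.divisors, ((moebius a : ℤ) : ℚ) = 0 := by rw [hZ, if_neg hd1]
      rw [hexp, hRHS, hB, hA, hNstar0, hfil, hZ0]
      have h1 : ∑ a ∈ d.divisors, ((moebius a : ℤ) : ℚ) * ((q:ℚ)^(d/a) + 1 - efun q)
          = (∑ a ∈ d.divisors, ((moebius a : ℤ) : ℚ) * (q:ℚ)^(d/a))
            + (1 - efun q) * ∑ a ∈ d.divisors, ((moebius a : ℤ) : ℚ) := by
        rw [Finset.mul_sum, ← Finset.sum_add_distrib]
        apply Finset.sum_congr rfl; intro a _; ring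
      have h2 : ∑ a ∈ d.divisors, ((moebius a : ℤ) : ℚ) * ((q:ℚ)^(d/a) - 1)
          = (∑ a ∈ d.divisors, ((moebius a : ℤ) : ℚ) * (q:ℚ)^(d/a))
            - ∑ a ∈ d.divisors, ((moebius a : ℤ) : ℚ) := by
        rw [← Finset.sum_sub_distrib]
        apply Finset.sum_congr rfl; intro a _; ring
      rw [h1, h2, hZ0]
      ring

noncomputable def Ffun (q : ℕ) : ArithmeticFunction ℚ :=
  ⟨fun m => if m = 0 then 0 else (q:ℚ)^m - efun q, by simp⟩

lemma Ffun_apply (q m : ℕ) (hm : m ≠ 0) : Ffun q m = (q:ℚ)^m - efun q := by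
  simp [Ffun, hm]

lemma mu_F_apply (q d : ℕ) (hd : d ≠ 0) :
    (((moebius : ArithmeticFunction ℤ) : ArithmeticFunction ℚ) * Ffun q) d
      = ∑ a ∈ d.divisors, ((moebius a : ℤ) : ℚ) * ((q:ℚ)^(d/a) - efun q) := by
  rw [ArithmeticFunction.mul_apply]
  rw [Nat.sum_divisorsAntidiagonal
    (f := fun a b => ((moebius : ArithmeticFunction ℤ) : ArithmeticFunction ℚ) a * Ffun q b)]
  apply Finset.sum_congr rfl
  intro a ha
  obtain ⟨hdvd, -⟩ := Nat.mem_divisors.mp ha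
  have ha0 : a ≠ 0 := by rintro rfl; simp at hdvd; omega
  have hda : d / a ≠ 0 := by
    have := Nat.le_of_dvd (by omega) hdvd
    have := Nat.div_pos this (by omega)
    omega
  rw [Ffun_apply q _ hda, ArithmeticFunction.intCoe_apply]

lemma zeta_mu_cancel (q : ℕ) :
    (((moebius : ArithmeticFunction ℤ) : ArithmeticFunction ℚ) * Ffun q)
      * ((zeta : ArithmeticFunction ℕ) : ArithmeticFunction ℚ) = Ffun q := by
  have h : ((moebius : ArithmeticFunction ℤ) : ArithmeticFunction ℚ)
      * ((zeta : ArithmeticFunction ℕ) : ArithmeticFunction ℚ) = 1 := by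
    have := congrArg (fun f : ArithmeticFunction ℤ => (f : ArithmeticFunction ℚ))
      ArithmeticFunction.moebius_mul_coe_zeta
    exact ArithmeticFunction.coe_moebius_mul_coe_zeta (R := ℚ)
  rw [mul_right_comm, h, one_mul]

lemma keysum (q n : ℕ) (hq : 2 ≤ q) (hn : n ≠ 0) :
    ∑ a ∈ n.divisors, (a:ℚ) * (Nstar (2*a) q + Mstar a q) = (q:ℚ)^n - efun q := by
  have h1 : ∑ a ∈ n.divisors, (a:ℚ) * (Nstar (2*a) q + Mstar a q)
      = ∑ a ∈ n.divisors,
          (((moebius : ArithmeticFunction ℤ) : ArithmeticFunction ℚ) * Ffun q) a := by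
    apply Finset.sum_congr rfl
    intro a ha
    have ha0 : a ≠ 0 := Nat.pos_of_mem_divisors ha |>.ne'
    rw [per_divisor q a hq ha0, mu_F_apply q a ha0]
  rw [h1, ← ArithmeticFunction.coe_mul_zeta_apply, zeta_mu_cancel, Ffun_apply q n hn]

lemma card_divisors_le (d : ℕ) : (Nat.divisors d).card ≤ d := by
  have h : Nat.divisors d ⊆ Finset.Icc 1 d := by
    intro a ha
    rw [Finset.mem_Icc]
    exact ⟨Nat.pos_of_mem_divisors ha, Nat.divisor_le ha⟩
  calc (Nat.divisors d).card ≤ (Finset.Icc 1 d).card := Finset.card_le_card h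
    _ = d := by rw [Nat.card_Icc]; omega

lemma sum_mu_bound (s : Finset ℕ) (t : ℕ → ℚ) (C : ℚ) (hC : 0 ≤ C)
    (h : ∀ a ∈ s, |t a| ≤ C) :
    |∑ a ∈ s, ((moebius a : ℤ) : ℚ) * t a| ≤ s.card * C := by
  calc |∑ a ∈ s, ((moebius a : ℤ) : ℚ) * t a| ≤ ∑ a ∈ s, |((moebius a : ℤ) : ℚ) * t a| :=
        Finset.abs_sum_le_sum_abs _ _
    _ ≤ ∑ a ∈ s, C := by
        apply Finset.sum_le_sum
        intro a ha
        rw [abs_mul]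
        have h1 : |((moebius a : ℤ) : ℚ)| ≤ 1 := by
          have := @ArithmeticFunction.abs_moebius_le_one a
          exact_mod_cast (by exact_mod_cast this : ((|moebius a| : ℤ) : ℚ) ≤ 1)
        calc |((moebius a : ℤ) : ℚ)| * |t a| ≤ 1 * C := by
              apply mul_le_mul h1 (h a ha) (abs_nonneg _) zero_le_one
          _ = C := one_mul C
    _ = s.card * C := by rw [Finset.sum_const, nsmul_eq_mul]

lemma term_bound (q d a : ℕ) (hq : 2 ≤ q) (hd : d ≠ 0) (ha : a ∈ d.divisors) :
    |(q:ℚ)^(d/a) + 1 - efun q| ≤ (q:ℚ)^d := by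
  obtain ⟨hdvd, -⟩ := Nat.mem_divisors.mp ha
  have ha0 : 0 < a := Nat.pos_of_mem_divisors ha
  have h1 : 1 ≤ d / a := Nat.div_pos (Nat.le_of_dvd (by omega) hdvd) ha0
  have h2 : d / a ≤ d := Nat.div_le_self d a
  have hq1 : (1:ℚ) ≤ q := by exact_mod_cast (by omega : 1 ≤ q)
  have hql : (2:ℚ) ≤ (q:ℚ)^(d/a) := by
    calc (2:ℚ) ≤ (q:ℚ) := by exact_mod_cast hq
      _ = (q:ℚ)^1 := (pow_one _).symm
      _ ≤ (q:ℚ)^(d/a) := pow_le_pow_right₀ hq1 h1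
  have hqd : (q:ℚ)^(d/a) ≤ (q:ℚ)^d := pow_le_pow_right₀ hq1 h2
  have he1 : (1:ℚ) ≤ efun q := by unfold efun; split <;> norm_num
  have he2 : (efun q : ℚ) ≤ 2 := by unfold efun; split <;> norm_num
  rw [abs_le]
  constructor <;> nlinarith

lemma nstar2_bound (q d : ℕ) (hq : 2 ≤ q) (hd : d ≠ 0) :
    |Nstar (2*d) q| ≤ (q:ℚ)^d := by
  have hB := two_d_nstar q d hd
  have hbound : |(2*(d:ℚ)) * Nstar (2*d) q| ≤ (d:ℚ) * (q:ℚ)^d := by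
    rw [hB]
    calc |∑ a ∈ d.divisors.filter (fun a => Odd a),
          ((moebius a : ℤ) : ℚ) * ((q:ℚ)^(d/a) + 1 - efun q)|
        ≤ (d.divisors.filter (fun a => Odd a)).card * (q:ℚ)^d := by
          apply sum_mu_bound _ _ _ (by positivity)
          intro a ha
          exact term_bound q d a hq hd (Finset.mem_filter.mp ha).1
      _ ≤ (d:ℚ) * (q:ℚ)^d := by
          apply mul_le_mul_of_nonneg_right _ (by positivity)
          have : (d.divisors.filter (fun a => Odd a)).card ≤ d :=
            le_trans (Finset.card_le_card (Finset.filter_subset _ _)) (card_divisors_le d)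
          exact_mod_cast this
  have hd1 : (1:ℚ) ≤ (d:ℚ) := by exact_mod_cast (by omega : 1 ≤ d)
  rw [abs_mul, abs_mul] at hbound
  have h2d : |(2:ℚ)| * |(d:ℚ)| = 2 * d := by
    rw [abs_of_nonneg (by norm_num : (0:ℚ) ≤ 2), abs_of_nonneg (by positivity)]
  nlinarith [abs_nonneg (Nstar (2*d) q), pow_nonneg (by positivity : (0:ℚ) ≤ (q:ℚ)) d]

lemma term_bound2 (q : ℕ) (hq : 2 ≤ q) (d m : ℕ) (hm : m ≤ d) :
    |(q:ℚ)^m + 1 - efun q| ≤ (q:ℚ)^d := by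
  have hq1 : (1:ℚ) ≤ q := by exact_mod_cast (by omega : 1 ≤ q)
  have h1 : (1:ℚ) ≤ (q:ℚ)^m := one_le_pow₀ hq1
  have hqd : (q:ℚ)^m ≤ (q:ℚ)^d := pow_le_pow_right₀ hq1 hm
  have he1 : (1:ℚ) ≤ efun q := by unfold efun; split <;> norm_num
  have he2 : (efun q : ℚ) ≤ 2 := by unfold efun; split <;> norm_num
  rw [abs_le]
  constructor <;> nlinarith

lemma nfun_bound (q d : ℕ) (hq : 2 ≤ q) (hd : d ≠ 0) : |Nfun d q| ≤ (q:ℚ)^d := by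
  have hA := d_nfun q d hd
  have hq1 : (1:ℚ) ≤ q := by exact_mod_cast (by omega : 1 ≤ q)
  have hbound : |(d:ℚ) * Nfun d q| ≤ (d:ℚ) * (q:ℚ)^d := by
    rw [hA]
    calc |∑ a ∈ d.divisors, ((moebius a : ℤ) : ℚ) * ((q:ℚ)^(d/a) - 1)|
        ≤ (d.divisors.card : ℚ) * (q:ℚ)^d := by
          apply sum_mu_bound _ _ _ (by positivity)
          intro a _
          have h1 : (1:ℚ) ≤ (q:ℚ)^(d/a) := one_le_pow₀ hq1
          have hqd : (q:ℚ)^(d/a) ≤ (q:ℚ)^d := pow_le_pow_right₀ hq1 (Nat.div_le_self d a)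
          rw [abs_le]; constructor <;> nlinarith
      _ ≤ (d:ℚ) * (q:ℚ)^d := by
          apply mul_le_mul_of_nonneg_right _ (by positivity)
          exact_mod_cast card_divisors_le d
  have hd1 : (1:ℚ) ≤ (d:ℚ) := by exact_mod_cast (by omega : 1 ≤ d)
  rw [abs_mul, abs_of_nonneg (by positivity : (0:ℚ) ≤ (d:ℚ))] at hbound
  nlinarith [abs_nonneg (Nfun d q), pow_nonneg (by positivity : (0:ℚ) ≤ (q:ℚ)) d]

lemma nstar_bound (q d : ℕ) (hq : 2 ≤ q) (hd : d ≠ 0) : |Nstar d q| ≤ (q:ℚ)^d := by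
  have hq1 : (1:ℚ) ≤ q := by exact_mod_cast (by omega : 1 ≤ q)
  have hqd1 : (2:ℚ) ≤ (q:ℚ)^d := by
    calc (2:ℚ) ≤ (q:ℚ) := by exact_mod_cast hq
      _ = (q:ℚ)^1 := (pow_one _).symm
      _ ≤ (q:ℚ)^d := pow_le_pow_right₀ hq1 (by omega)
  rcases Nat.even_or_odd d with hde | hdo
  · have hC := d_nstar_even q d hd hde
    have hbound : |(d:ℚ) * Nstar d q| ≤ (d:ℚ) * (q:ℚ)^d := by
      rw [hC]
      calc |∑ a ∈ d.divisors.filter (fun a => Odd a),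
            ((moebius a : ℤ) : ℚ) * ((q:ℚ)^(d/(2*a)) + 1 - efun q)|
          ≤ ((d.divisors.filter (fun a => Odd a)).card : ℚ) * (q:ℚ)^d := by
            apply sum_mu_bound _ _ _ (by positivity)
            intro a _
            exact term_bound2 q hq d _ (Nat.div_le_self d _)
        _ ≤ (d:ℚ) * (q:ℚ)^d := by
            apply mul_le_mul_of_nonneg_right _ (by positivity)
            have : (d.divisors.filter (fun a => Odd a)).card ≤ d :=
              le_trans (Finset.card_le_card (Finset.filter_subset _ _)) (card_divisors_le d)
            exact_mod_cast this
    have hd1 : (1:ℚ) ≤ (d:ℚ) := by exact_mod_cast (by omega : 1 ≤ d)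
    rw [abs_mul, abs_of_nonneg (by positivity : (0:ℚ) ≤ (d:ℚ))] at hbound
    nlinarith [abs_nonneg (Nstar d q), pow_nonneg (by positivity : (0:ℚ) ≤ (q:ℚ)) d]
  · rcases eq_or_ne d 1 with rfl | hd1
    · rw [Nstar, if_neg (by decide), if_pos rfl]
      have he1 : (1:ℚ) ≤ efun q := by unfold efun; split <;> norm_num
      have he2 : (efun q : ℚ) ≤ 2 := by unfold efun; split <;> norm_num
      rw [abs_of_nonneg (by linarith)]
      simpa using le_trans he2 hqd1
    · rw [Nstar, if_neg (Nat.not_even_iff_odd.mpr hdo), if_neg hd1, abs_zero]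
      positivity

lemma mstar_bound (q d : ℕ) (hq : 2 ≤ q) (hd : d ≠ 0) : |Mstar d q| ≤ (q:ℚ)^d := by
  rw [Mstar]
  have h1 := nfun_bound q d hq hd
  have h2 := nstar_bound q d hq hd
  rw [abs_div, abs_of_nonneg (by norm_num : (0:ℚ) ≤ 2)]
  have := abs_sub (Nfun d q) (Nstar d q)
  have h3 : |Nfun d q - Nstar d q| ≤ 2 * (q:ℚ)^d := by
    calc |Nfun d q - Nstar d q| ≤ |Nfun d q| + |Nstar d q| := abs_sub _ _
      _ ≤ 2 * (q:ℚ)^d := by linarith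
  linarith

section Analytic

lemma base_pos {x : ℝ} (hx1 : |x| < 1) (m : ℕ) (hm : m ≠ 0) : 0 < 1 - x ^ m := by
  have h1 : |x ^ m| < 1 := by
    rw [abs_pow]
    exact pow_lt_one₀ (abs_nonneg x) hx1 hm
  have := abs_lt.mp h1
  linarith [this.2]

lemma log_bound {x : ℝ} (hx1 : |x| < 1) (m : ℕ) (hm : m ≠ 0) :
    |Real.log (1 - x ^ m)| ≤ |x| ^ m / (1 - |x|) := by
  have hxm : |x ^ m| < 1 := by
    rw [abs_pow]; exact pow_lt_one₀ (abs_nonneg x) hx1 hm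
  have h := Real.abs_log_sub_add_sum_range_le hxm 0
  simp only [Finset.range_zero, Finset.sum_empty, zero_add, pow_one] at h
  calc |Real.log (1 - x ^ m)| ≤ |x ^ m| / (1 - |x ^ m|) := h
    _ ≤ |x| ^ m / (1 - |x|) := by
        rw [abs_pow]
        gcongr
        · exact pow_le_of_le_one (abs_nonneg x) hx1.le hm

lemma summable_cL {q : ℕ} {x : ℝ} (hq : 2 ≤ q) (hx : |x| < 1/q) (c : ℕ → ℝ)
    (hc : ∀ d, d ≠ 0 → |c d| ≤ (q:ℝ)^d) :
    Summable (fun d : ℕ => c (d+1) * Real.log (1 - x^(d+1))) := by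
  have hq0 : (0:ℝ) < q := by positivity
  have hr : (q:ℝ) * |x| < 1 := by
    have := (lt_div_iff₀ hq0).mp hx
    linarith
  have hx1 : |x| < 1 := by
    have h1q : 1/(q:ℝ) ≤ 1 := by
      rw [div_le_one hq0]; exact_mod_cast (by omega : 1 ≤ q)
    linarith
  set r : ℝ := (q:ℝ) * |x| with hrdef
  have hr0 : 0 ≤ r := by positivity
  apply Summable.of_norm_bounded (g := fun d => (1/(1-|x|)) * r^(d+1))
  · apply Summable.mul_left
    exact ((summable_geometric_of_lt_one hr0 hr).mul_left r).congr (fun d => by ring)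
  · intro d
    have hd0 : d + 1 ≠ 0 := Nat.succ_ne_zero d
    rw [Real.norm_eq_abs, abs_mul]
    have h1 := log_bound hx1 (d+1) hd0
    have h2 := hc (d+1) hd0
    have hxpos : 0 < 1 - |x| := by linarith
    calc |c (d+1)| * |Real.log (1 - x^(d+1))|
        ≤ (q:ℝ)^(d+1) * (|x|^(d+1) / (1-|x|)) := by
          apply mul_le_mul h2 h1 (abs_nonneg _) (by positivity)
      _ = (1/(1-|x|)) * r^(d+1) := by
          rw [hrdef, mul_pow]; field_simp
      _ ≤ (1/(1-|x|)) * r^(d+1) := le_refl _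

lemma hasProd_exp {q : ℕ} {x : ℝ} (hq : 2 ≤ q) (hx : |x| < 1/q) (c : ℕ → ℝ)
    (hc : ∀ d, d ≠ 0 → |c d| ≤ (q:ℝ)^d) :
    HasProd (fun d : ℕ => (1 - x^(d+1)) ^ (c (d+1)))
      (Real.exp (∑' d : ℕ, c (d+1) * Real.log (1 - x^(d+1)))) := by
  have hx1 : |x| < 1 := by
    have hq0 : (0:ℝ) < q := by positivity
    have h1q : 1/(q:ℝ) ≤ 1 := by
      rw [div_le_one hq0]; exact_mod_cast (by omega : 1 ≤ q)
    linarith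
  have hs := (summable_cL hq hx c hc).hasSum
  have := hs.rexp
  convert this using 1
  funext d
  simp only [Function.comp_apply]
  rw [Real.rpow_def_of_pos (base_pos hx1 (d+1) (Nat.succ_ne_zero d)), mul_comm]

end Analytic

section KeyTsum

variable {q : ℕ} {x : ℝ}

lemma key_hasSum (hq : 2 ≤ q) (hx : |x| < 1/q) :
    HasSum (fun d : ℕ => ((Nstar (2*(d+1)) q + Mstar (d+1) q : ℚ) : ℝ) * Real.log (1 - x^(d+1)))
      (Real.log (1 - q*x) - (efun q : ℝ) * Real.log (1 - x)) := by
  have hq0 : (0:ℝ) < q := by positivity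
  have hq1 : (1:ℝ) ≤ q := by exact_mod_cast (by omega : 1 ≤ q)
  have hr : (q:ℝ) * |x| < 1 := by
    have := (lt_div_iff₀ hq0).mp hx
    linarith
  have hx1 : |x| < 1 := by
    have h1q : 1/(q:ℝ) ≤ 1 := by rw [div_le_one hq0]; exact hq1
    linarith
  set r : ℝ := (q:ℝ) * |x| with hrdef
  have hr0 : 0 ≤ r := by positivity
  set E : ℕ → ℝ := fun m => ((Nstar (2*m) q + Mstar m q : ℚ) : ℝ) with hEdef
  have hE : ∀ m, m ≠ 0 → |E m| ≤ 2 * (q:ℝ)^m := by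
    intro m hm
    have h1 := nstar2_bound q m hq hm
    have h2 := mstar_bound q m hq hm
    have h3 : |Nstar (2*m) q + Mstar m q| ≤ 2 * (q:ℚ)^m := by
      calc |Nstar (2*m) q + Mstar m q| ≤ |Nstar (2*m) q| + |Mstar m q| := abs_add_le _ _
        _ ≤ 2 * (q:ℚ)^m := by linarith
    rw [hEdef]
    have : |((Nstar (2*m) q + Mstar m q : ℚ) : ℝ)| = ((|Nstar (2*m) q + Mstar m q| : ℚ) : ℝ) := by
      rw [Rat.cast_abs]
    rw [this]
    exact_mod_cast h3
  set G : ℕ × ℕ → ℝ := fun p => E (p.1+1) * (-(x^((p.1+1)*(p.2+1)) / ((p.2+1 : ℕ) : ℝ))) with hGdef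
  -- Summability of G
  have hGsum : Summable G := by
    apply Summable.of_norm_bounded (g := fun p : ℕ × ℕ => (2*r) * (r^p.1 * r^p.2))
    · exact (((summable_geometric_of_lt_one hr0 hr).mul_of_nonneg
        (summable_geometric_of_lt_one hr0 hr) (fun _ => by positivity)
        (fun _ => by positivity))).mul_left (2*r)
    · intro p
      obtain ⟨d, k⟩ := p
      simp only [hGdef, Real.norm_eq_abs, abs_mul, abs_neg, abs_div]
      have hE1 := hE (d+1) (Nat.succ_ne_zero d)
      have hk1 : (1:ℝ) ≤ ((k+1:ℕ):ℝ) := by exact_mod_cast Nat.succ_le_succ (Nat.zero_le k)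
      have hstep1 : |x ^ ((d+1)*(k+1))| / |((k+1:ℕ):ℝ)| ≤ |x|^((d+1)*(k+1)) := by
        have hk : |((k+1:ℕ):ℝ)| = ((k+1:ℕ):ℝ) := abs_of_pos (by positivity)
        rw [abs_pow, hk]
        exact div_le_self (by positivity) hk1
      have hstep2 : (q:ℝ)^(d+1) ≤ (q:ℝ)^((d+1)*(k+1)) :=
        pow_le_pow_right₀ hq1 (Nat.le_mul_of_pos_right _ (Nat.succ_pos k))
      have hstep3 : (q:ℝ)^((d+1)*(k+1)) * |x|^((d+1)*(k+1)) = r^((d+1)*(k+1)) := by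
        rw [hrdef, mul_pow]
      have hstep4 : r^((d+1)*(k+1)) ≤ r^(d+1+k) :=
        pow_le_pow_of_le_one hr0 hr.le (by nlinarith)
      calc |E (d+1)| * (|x ^ ((d+1)*(k+1))| / |((k+1:ℕ):ℝ)|)
          ≤ (2*(q:ℝ)^(d+1)) * |x|^((d+1)*(k+1)) :=
            mul_le_mul hE1 hstep1 (by positivity) (by positivity)
        _ ≤ 2 * r^((d+1)*(k+1)) := by
            nlinarith [pow_nonneg (abs_nonneg x) ((d+1)*(k+1)),
              pow_nonneg (le_trans zero_le_one hq1) (d+1)]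
        _ ≤ 2 * r^(d+1+k) := by linarith
        _ = 2*r * (r^d * r^k) := by ring
  -- row sums
  have hrow : ∀ d : ℕ, HasSum (fun k => G (d, k)) (E (d+1) * Real.log (1 - x^(d+1))) := by
    intro d
    have hxm : |x^(d+1)| < 1 := by
      rw [abs_pow]; exact pow_lt_one₀ (abs_nonneg x) hx1 (Nat.succ_ne_zero d)
    have h := (Real.hasSum_pow_div_log_of_abs_lt_one hxm).mul_left (-(E (d+1)))
    have heq : (fun k : ℕ => -(E (d+1)) * ((x^(d+1))^(k+1) / ((k : ℝ) + 1)))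
        = fun k => G (d, k) := by
      funext k
      rw [hGdef]
      simp only
      rw [← pow_mul]
      push_cast
      ring
    rw [heq] at h
    convert h using 1
    · rfl
    · ring
  -- total sum via rows
  have htot : HasSum (fun d : ℕ => E (d+1) * Real.log (1 - x^(d+1))) (∑' p, G p) :=
    HasSum.prod_fiberwise hGsum.hasSum hrow
  -- total sum via fibers of n = (d+1)(k+1)
  have hfib := hGsum.hasSum.tsum_fiberwise (fun p => (p.1+1)*(p.2+1))
  -- identify fiber sums
  set c : ℕ → ℝ := fun n => if n = 0 then 0 else -(((q:ℝ)^n - efun q) * x^n / n) with hcdef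
  have hfib_eq : (fun n : ℕ => ∑' p : (fun p : ℕ × ℕ => (p.1+1)*(p.2+1)) ⁻¹' {n}, G p) = c := by
    funext n
    rcases eq_or_ne n 0 with rfl | hn
    · have hset : (fun p : ℕ × ℕ => (p.1+1)*(p.2+1)) ⁻¹' {0} = ∅ := by
        ext p
        simp only [Set.mem_preimage, Set.mem_singleton_iff, Set.mem_empty_iff_false, iff_false]
        positivity
      rw [hset]
      simp [hcdef]
    · have hset : (fun p : ℕ × ℕ => (p.1+1)*(p.2+1)) ⁻¹' {n}
          = ↑(n.divisorsAntidiagonal.image (fun p : ℕ×ℕ => (p.1 - 1, p.2 - 1))) := by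
        ext ⟨a, b⟩
        simp only [Set.mem_preimage, Set.mem_singleton_iff, Finset.coe_image, Set.mem_image,
          Finset.mem_coe, Nat.mem_divisorsAntidiagonal, Prod.exists]
        constructor
        · intro h
          exact ⟨a+1, b+1, ⟨h, hn⟩, by simp⟩
        · rintro ⟨u, v, ⟨huv, -⟩, h2⟩
          have hu : u ≠ 0 := by rintro rfl; rw [zero_mul] at huv; exact hn huv.symm
          have hv : v ≠ 0 := by rintro rfl; rw [mul_zero] at huv; exact hn huv.symm
          have ha : u - 1 = a := congrArg Prod.fst h2
          have hb : v - 1 = b := congrArg Prod.snd h2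
          have hu1 : u = a + 1 := by omega
          have hv1 : v = b + 1 := by omega
          rw [← hu1, ← hv1]
          exact huv
      rw [hset, Finset.tsum_subtype']
      rw [Finset.sum_image (by
        rintro ⟨u, v⟩ h1 ⟨u', v'⟩ h2 heq
        have n1 := Nat.ne_zero_of_mem_divisorsAntidiagonal h1
        have n2 := Nat.ne_zero_of_mem_divisorsAntidiagonal h2
        simp only [Prod.mk.injEq] at heq ⊢
        omega)]
      have hsum1 : ∑ p ∈ n.divisorsAntidiagonal, G (p.1 - 1, p.2 - 1)
          = ∑ p ∈ n.divisorsAntidiagonal, E p.1 * (-(x^n / ((p.2:ℕ):ℝ))) := by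
        apply Finset.sum_congr rfl
        rintro ⟨u, v⟩ hp
        have hn0 := Nat.ne_zero_of_mem_divisorsAntidiagonal hp
        have huv := (Nat.mem_divisorsAntidiagonal.mp hp).1
        simp only [hGdef]
        rw [show u - 1 + 1 = u from by omega, show v - 1 + 1 = v from by omega, huv]
      rw [hsum1]
      rw [Nat.sum_divisorsAntidiagonal (f := fun a b => E a * (-(x^n / ((b:ℕ):ℝ))))]
      have hsum2 : ∑ a ∈ n.divisors, E a * (-(x^n / ((n/a : ℕ):ℝ)))
          = ∑ a ∈ n.divisors, (-(x^n)/(n:ℝ)) * ((a:ℝ) * E a) := by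
        apply Finset.sum_congr rfl
        intro a ha
        obtain ⟨hdvd, -⟩ := Nat.mem_divisors.mp ha
        have ha0 : a ≠ 0 := (Nat.pos_of_mem_divisors ha).ne'
        have han : ((n/a : ℕ):ℝ) = (n:ℝ)/(a:ℝ) := by
          rw [Nat.cast_div hdvd (by exact_mod_cast ha0)]
        rw [han]
        have hna : (n:ℝ) ≠ 0 := by exact_mod_cast hn
        have haa : (a:ℝ) ≠ 0 := by exact_mod_cast ha0
        rw [div_div_eq_mul_div]
        ring
      rw [hsum2, ← Finset.mul_sum]
      have hks : ∑ a ∈ n.divisors, (a:ℝ) * E a = (q:ℝ)^n - (efun q:ℝ) := by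
        have h0 := keysum q n hq hn
        have h1 := congrArg (fun z : ℚ => (z:ℝ)) h0
        push_cast at h1
        simpa [hEdef] using h1
      rw [hks, hcdef]
      simp only [hn, if_false]
      ring
  rw [hfib_eq] at hfib
  -- c has the closed-form sum
  have hclosed : HasSum c (Real.log (1 - q*x) - (efun q : ℝ) * Real.log (1 - x)) := by
    have hqx : |(q:ℝ)*x| < 1 := by
      rw [abs_mul, abs_of_pos hq0]; exact hr
    have h1 := Real.hasSum_pow_div_log_of_abs_lt_one hqx
    have h2 := (Real.hasSum_pow_div_log_of_abs_lt_one hx1).mul_left (efun q : ℝ)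
    have h3 := h2.sub h1
    have heq : (fun k : ℕ => (efun q : ℝ) * (x^(k+1)/((k:ℝ)+1)) - (((q:ℝ)*x)^(k+1)/((k:ℝ)+1)))
        = fun k => c (k+1) := by
      funext k
      rw [hcdef]
      simp only [Nat.succ_ne_zero, if_false]
      rw [mul_pow]
      push_cast
      ring
    rw [heq] at h3
    have h4 := (hasSum_nat_add_iff 1).mp h3
    simp only [Finset.range_one, Finset.sum_singleton] at h4
    have hc0 : c 0 = 0 := by rw [hcdef]; simp
    rw [hc0, add_zero] at h4
    convert h4 using 1
    · rfl
    · ring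
  have hST : (∑' p, G p) = Real.log (1 - q*x) - (efun q : ℝ) * Real.log (1 - x) :=
    hfib.unique hclosed
  rw [hST] at htot
  exact htot

end KeyTsum

/-- Lemma 2.3(d): for an integer `q ≥ 2` and a real `x` with `|x| < 1/q`, the families
`d ↦ (1 - x^d)^{N*(2d,q)}` and `d ↦ (1 - x^d)^{M*(d,q)}` over `d ≥ 1` are multipliable, and
`∏_{d ≥ 1} (1 - x^d)^{N*(2d,q)} · ∏_{d ≥ 1} (1 - x^d)^{M*(d,q)} = (1 - qx)/(1 - x)^{e(q)}`. -/
theorem statement9 (q : ℕ) (hq : 2 ≤ q) (x : ℝ) (hx : |x| < 1 / q) :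
    Multipliable (fun d : ℕ => (1 - x ^ (d + 1)) ^ ((Nstar (2 * (d + 1)) q : ℚ) : ℝ)) ∧
    Multipliable (fun d : ℕ => (1 - x ^ (d + 1)) ^ ((Mstar (d + 1) q : ℚ) : ℝ)) ∧
    (∏' d : ℕ, (1 - x ^ (d + 1)) ^ ((Nstar (2 * (d + 1)) q : ℚ) : ℝ)) *
      (∏' d : ℕ, (1 - x ^ (d + 1)) ^ ((Mstar (d + 1) q : ℚ) : ℝ)) =
    (1 - q * x) / (1 - x) ^ efun q := by
  have hq0 : (0:ℝ) < q := by positivity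
  have hq1 : (1:ℝ) ≤ q := by exact_mod_cast (by omega : 1 ≤ q)
  have hr : (q:ℝ) * |x| < 1 := by
    have := (lt_div_iff₀ hq0).mp hx
    linarith
  have hx1 : |x| < 1 := by
    have h1q : 1/(q:ℝ) ≤ 1 := by rw [div_le_one hq0]; exact hq1
    linarith
  have hc1 : ∀ m, m ≠ 0 → |((Nstar (2*m) q : ℚ) : ℝ)| ≤ (q:ℝ)^m := by
    intro m hm
    have := nstar2_bound q m hq hm
    rw [← Rat.cast_abs]
    exact_mod_cast this
  have hc2 : ∀ m, m ≠ 0 → |((Mstar m q : ℚ) : ℝ)| ≤ (q:ℝ)^m := by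
    intro m hm
    have := mstar_bound q m hq hm
    rw [← Rat.cast_abs]
    exact_mod_cast this
  have hp1 : HasProd (fun d : ℕ => (1 - x ^ (d + 1)) ^ ((Nstar (2 * (d + 1)) q : ℚ) : ℝ))
      (Real.exp (∑' d : ℕ, ((Nstar (2*(d+1)) q : ℚ) : ℝ) * Real.log (1 - x^(d+1)))) :=
    hasProd_exp hq hx (fun m => ((Nstar (2*m) q : ℚ) : ℝ)) hc1
  have hp2 : HasProd (fun d : ℕ => (1 - x ^ (d + 1)) ^ ((Mstar (d + 1) q : ℚ) : ℝ))
      (Real.exp (∑' d : ℕ, ((Mstar (d+1) q : ℚ) : ℝ) * Real.log (1 - x^(d+1)))) :=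
    hasProd_exp hq hx (fun m => ((Mstar m q : ℚ) : ℝ)) hc2
  refine ⟨hp1.multipliable, hp2.multipliable, ?_⟩
  rw [hp1.tprod_eq, hp2.tprod_eq, ← Real.exp_add]
  have hsum1 : Summable (fun d : ℕ => ((Nstar (2*(d+1)) q : ℚ) : ℝ) * Real.log (1 - x^(d+1))) :=
    summable_cL hq hx (fun m => ((Nstar (2*m) q : ℚ) : ℝ)) hc1
  have hsum2 : Summable (fun d : ℕ => ((Mstar (d+1) q : ℚ) : ℝ) * Real.log (1 - x^(d+1))) :=
    summable_cL hq hx (fun m => ((Mstar m q : ℚ) : ℝ)) hc2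
  have hadd := hsum1.hasSum.add hsum2.hasSum
  have heq : (fun d : ℕ => ((Nstar (2*(d+1)) q : ℚ) : ℝ) * Real.log (1 - x^(d+1))
        + ((Mstar (d+1) q : ℚ) : ℝ) * Real.log (1 - x^(d+1)))
      = fun d : ℕ => ((Nstar (2*(d+1)) q + Mstar (d+1) q : ℚ) : ℝ) * Real.log (1 - x^(d+1)) := by
    funext d
    push_cast
    ring
  rw [heq] at hadd
  have hkey := key_hasSum hq hx
  have hT := hadd.unique hkey
  rw [hT]
  have h1 : (0:ℝ) < 1 - q*x := by
    have hle : (q:ℝ)*x ≤ |(q:ℝ)*x| := le_abs_self _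
    rw [abs_mul, abs_of_pos hq0] at hle
    linarith
  have h2 : (0:ℝ) < 1 - x := by
    have := abs_lt.mp hx1
    linarith [this.2]
  rw [Real.exp_sub, Real.exp_log h1, Real.exp_nat_mul, Real.exp_log h2]
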